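/- There exist a well-founded partial order T, a family of well-founded partial orders (P_t)_{t∈T}, and an element a of the ranked sum P = RP such that rank_P(a) > rank_T(f(a)) + rank_{P_{f(a)}}(a). Concretely, with T = {0,1} (0 < 1) and P_0 = P_1 = ω + 1, the maximum element a of P_1 satisfies rank_P(a) = ω + 1 > ω = rank_T(f(a)) + rank_{P_1}(a). -/

import Mathlib

open Ordinal

section RankedSum

variable {T : Type*} [PartialOrder T] {P : T → Type*} [∀ t, PartialOrder (P t)]
  [∀ t, WellFoundedLT (P t)]

/-- The primitive rank of an element of the disjoint union: its ordinal rank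
inside its own component. -/
noncomputable def primRank (a : Σ t, P t) : Ordinal :=
  IsWellFounded.rank (α := P a.1) (· < ·) a.2

/-- The ranked sum (strict) order on the disjoint union of the family `P`. -/
def RankedLT (a b : Σ t, P t) : Prop :=
  (∃ h : a.1 = b.1, (h ▸ a.2) < b.2) ∨ (a.1 < b.1 ∧ primRank a ≤ primRank b)

/-- The reflexive closure of the ranked sum order. -/
def RankedLE (a b : Σ t, P t) : Prop :=
  RankedLT a b ∨ a = b

variable [WellFoundedLT T]

theorem rankedLT_wf : WellFounded (RankedLT (T := T) (P := P)) := by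
  have hsub : Subrelation (RankedLT (T := T) (P := P))
      (InvImage (Prod.Lex (· < ·) (· < ·))
        (fun a => (IsWellFounded.rank (α := T) (· < ·) a.1, primRank a))) := by
    rintro ⟨s, x⟩ ⟨t, y⟩ (⟨h, hlt⟩ | ⟨h, _⟩)
    · dsimp at h
      subst h
      exact Prod.Lex.right _ (IsWellFounded.rank_lt_of_rel hlt)
    · exact Prod.Lex.left _ _ (IsWellFounded.rank_lt_of_rel h)
  exact Subrelation.wf hsub
    (InvImage.wf _ (WellFounded.prod_lex wellFounded_lt wellFounded_lt))

instance : IsWellFounded (Σ t, P t) RankedLT := ⟨rankedLT_wf⟩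

/-- The rank of an element of the ranked sum. -/
noncomputable def rankedRank (a : Σ t, P t) : Ordinal :=
  IsWellFounded.rank (RankedLT (T := T) (P := P)) a

end RankedSum

universe u

-- rank in Iic
lemma rank_Iic (c : Ordinal.{u}) (x : Ordinal) (hx : x ∈ Set.Iic c) :
    IsWellFounded.rank (α := Set.Iic c) (· < ·) ⟨x, hx⟩ = Ordinal.lift.{u+1} x := by
  induction x using Ordinal.induction with
  | h x IH =>
    apply le_antisymm
    · rw [IsWellFounded.rank_eq]
      apply Ordinal.iSup_le
      rintro ⟨⟨b, hb⟩, hbx⟩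
      have hbx' : b < x := hbx
      rw [IH b hbx' hb]
      rw [Order.succ_le_iff]
      exact Ordinal.lift_lt.mpr hbx'
    · apply le_of_forall_lt
      intro z hz
      obtain ⟨w, hw, rfl⟩ := Ordinal.lt_lift_iff.mp hz
      calc Ordinal.lift.{u+1} w
          = IsWellFounded.rank (α := Set.Iic c) (· < ·) ⟨w, hw.le.trans hx⟩ :=
            (IH w hw (hw.le.trans hx)).symm
        _ < _ := IsWellFounded.rank_lt_of_rel (by exact hw)

lemma primRank_Iic (a : Σ _ : Set.Iic (1 : Ordinal.{u}), Set.Iic (ω : Ordinal.{u})) :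
    primRank a = Ordinal.lift.{u+1} a.2.1 := by
  obtain ⟨t, x, hx⟩ := a
  exact rank_Iic ω x hx

lemma rank0 (x : Ordinal) (hx : x ∈ Set.Iic (ω : Ordinal.{u})) :
    rankedRank (⟨⟨0, Set.mem_Iic.mpr zero_le_one⟩, ⟨x, hx⟩⟩ :
      Σ _ : Set.Iic (1 : Ordinal.{u}), Set.Iic (ω : Ordinal.{u})) = Ordinal.lift.{u+1} x := by
  induction x using Ordinal.induction with
  | h x IH =>
    apply le_antisymm
    · rw [rankedRank, IsWellFounded.rank_eq]
      apply Ordinal.iSup_le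
      rintro ⟨⟨s, y⟩, hb⟩
      rcases hb with ⟨h, hlt⟩ | ⟨h, -⟩
      · dsimp only at h hlt
        subst h
        obtain ⟨y, hy⟩ := y
        have hyx : y < x := hlt
        rw [show IsWellFounded.rank RankedLT _ = _ from IH y hyx hy, Order.succ_le_iff]
        exact Ordinal.lift_lt.mpr hyx
      · exact absurd (show s.1 < 0 from h) (not_lt_of_ge zero_le)
    · apply le_of_forall_lt
      intro z hz
      obtain ⟨w, hw, rfl⟩ := Ordinal.lt_lift_iff.mp hz
      have hrel : RankedLT
          (⟨⟨0, Set.mem_Iic.mpr zero_le_one⟩, ⟨w, hw.le.trans hx⟩⟩ :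
            Σ _ : Set.Iic (1 : Ordinal.{u}), Set.Iic (ω : Ordinal.{u}))
          ⟨⟨0, Set.mem_Iic.mpr zero_le_one⟩, ⟨x, hx⟩⟩ :=
        Or.inl ⟨rfl, show (w : Ordinal) < x from hw⟩
      have := IsWellFounded.rank_lt_of_rel hrel
      rw [show IsWellFounded.rank RankedLT _ = _ from IH w hw (hw.le.trans hx)] at this
      exact this

lemma rank1_le (x : Ordinal) (hx : x ∈ Set.Iic (ω : Ordinal.{u})) :
    rankedRank (⟨⟨1, Set.self_mem_Iic⟩, ⟨x, hx⟩⟩ :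
      Σ _ : Set.Iic (1 : Ordinal.{u}), Set.Iic (ω : Ordinal.{u})) ≤
      Ordinal.lift.{u+1} x + 1 := by
  induction x using Ordinal.induction with
  | h x IH =>
    rw [rankedRank, IsWellFounded.rank_eq]
    apply Ordinal.iSup_le
    rintro ⟨⟨s, y⟩, hb⟩
    have key : IsWellFounded.rank (RankedLT
        (T := Set.Iic (1 : Ordinal.{u})) (P := fun _ => Set.Iic (ω : Ordinal.{u})))
        ⟨s, y⟩ ≤ Ordinal.lift.{u+1} x := by
      rcases hb with ⟨h, hlt⟩ | ⟨h, hpr⟩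
      · dsimp only at h hlt
        subst h
        obtain ⟨y, hy⟩ := y
        have hyx : y < x := hlt
        calc IsWellFounded.rank RankedLT _ ≤ Ordinal.lift.{u+1} y + 1 := IH y hyx hy
          _ ≤ Ordinal.lift.{u+1} x := by
              rw [Ordinal.add_one_eq_succ, Order.succ_le_iff]
              exact Ordinal.lift_lt.mpr hyx
      · have hs0 : s.1 = 0 := Ordinal.lt_one_iff_zero.mp h
        obtain ⟨s, hs⟩ := s
        obtain ⟨y, hy⟩ := y
        dsimp only at hs0
        subst hs0
        rw [show (⟨⟨0, hs⟩, ⟨y, hy⟩⟩ :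
            Σ _ : Set.Iic (1 : Ordinal.{u}), Set.Iic (ω : Ordinal.{u})) =
            ⟨⟨0, Set.mem_Iic.mpr zero_le_one⟩, ⟨y, hy⟩⟩ from rfl]
        rw [show IsWellFounded.rank RankedLT _ = _ from rank0 y hy]
        rw [primRank_Iic, primRank_Iic] at hpr
        exact hpr
    calc Order.succ (IsWellFounded.rank RankedLT _) ≤
          Order.succ (Ordinal.lift.{u+1} x) := Order.succ_le_succ key
      _ = Ordinal.lift.{u+1} x + 1 := (Ordinal.add_one_eq_succ _).symm

lemma rank_max :
    rankedRank (⟨⟨1, Set.self_mem_Iic⟩, ⟨ω, Set.self_mem_Iic⟩⟩ :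
      Σ _ : Set.Iic (1 : Ordinal.{u}), Set.Iic (ω : Ordinal.{u})) = ω + 1 := by
  apply le_antisymm
  · rw [rankedRank, IsWellFounded.rank_eq]
    apply Ordinal.iSup_le
    rintro ⟨⟨s, y⟩, hb⟩
    have key : IsWellFounded.rank (RankedLT
        (T := Set.Iic (1 : Ordinal.{u})) (P := fun _ => Set.Iic (ω : Ordinal.{u})))
        ⟨s, y⟩ ≤ ω := by
      rcases hb with ⟨h, hlt⟩ | ⟨h, hpr⟩
      · dsimp only at h hlt
        subst h
        obtain ⟨y, hy⟩ := y
        have hyx : y < ω := hlt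
        calc IsWellFounded.rank RankedLT _ ≤ Ordinal.lift.{u+1} y + 1 := rank1_le y hy
          _ ≤ ω := by
              rw [Ordinal.add_one_eq_succ, Order.succ_le_iff, ← Ordinal.lift_omega0.{u+1,u}]
              exact Ordinal.lift_lt.mpr hyx
      · have hs0 : s.1 = 0 := Ordinal.lt_one_iff_zero.mp h
        obtain ⟨s, hs⟩ := s
        obtain ⟨y, hy⟩ := y
        dsimp only at hs0
        subst hs0
        rw [show IsWellFounded.rank RankedLT _ = _ from rank0 y hy,
          ← Ordinal.lift_omega0.{u+1,u}]
        exact Ordinal.lift_le.mpr hy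
    calc Order.succ (IsWellFounded.rank RankedLT _) ≤ Order.succ (ω : Ordinal.{u+1}) :=
          Order.succ_le_succ key
      _ = ω + 1 := (Ordinal.add_one_eq_succ _).symm
  · have hrel : RankedLT
        (⟨⟨0, Set.mem_Iic.mpr zero_le_one⟩, ⟨ω, Set.self_mem_Iic⟩⟩ :
          Σ _ : Set.Iic (1 : Ordinal.{u}), Set.Iic (ω : Ordinal.{u}))
        ⟨⟨1, Set.self_mem_Iic⟩, ⟨ω, Set.self_mem_Iic⟩⟩ :=
      Or.inr ⟨show (0 : Ordinal) < 1 from zero_lt_one, le_rfl⟩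
    have := IsWellFounded.rank_lt_of_rel hrel
    rw [show IsWellFounded.rank RankedLT _ = _ from rank0 ω Set.self_mem_Iic,
      Ordinal.lift_omega0.{u+1,u}] at this
    rw [Ordinal.add_one_eq_succ, Order.succ_le_iff]
    exact this


lemma rank_bool_false : IsWellFounded.rank (α := Bool) (· < ·) false = 0 := by
  rw [IsWellFounded.rank_eq]
  apply le_antisymm _ zero_le
  apply Ordinal.iSup_le
  rintro ⟨b, hb⟩
  exact absurd hb (by simp)

lemma rank_bool_true : IsWellFounded.rank (α := Bool) (· < ·) true ≤ 1 := by
  rw [IsWellFounded.rank_eq]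
  apply Ordinal.iSup_le
  rintro ⟨b, hb⟩
  have hb' : b = false := by cases b <;> simp_all
  subst hb' 
  rw [rank_bool_false]
  simp

lemma rank_wt_coe (n : ℕ) :
    IsWellFounded.rank (α := WithTop ℕ) (· < ·) (n : WithTop ℕ) ≤ n := by
  induction n using Nat.strong_induction_on with
  | _ n IH =>
    rw [IsWellFounded.rank_eq]
    apply Ordinal.iSup_le
    rintro ⟨b, hb⟩
    lift b to ℕ using (hb.trans (WithTop.coe_lt_top n)).ne
    have hbn : b < n := WithTop.coe_lt_coe.mp hb

    calc Order.succ (IsWellFounded.rank (α := WithTop ℕ) (· < ·) (b : WithTop ℕ))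
        ≤ Order.succ (b : Ordinal) := Order.succ_le_succ (IH b hbn)
      _ = (b : Ordinal) + 1 := (Ordinal.add_one_eq_succ _).symm
      _ = ((b + 1 : ℕ) : Ordinal) := by push_cast; ring
      _ ≤ (n : Ordinal) := Nat.cast_le.mpr hbn

lemma rank_wt_top : IsWellFounded.rank (α := WithTop ℕ) (· < ·) (⊤ : WithTop ℕ) ≤ ω := by
  rw [IsWellFounded.rank_eq]
  apply Ordinal.iSup_le
  rintro ⟨b, hb⟩
  lift b to ℕ using hb.ne
  calc Order.succ (IsWellFounded.rank (α := WithTop ℕ) (· < ·) (b : WithTop ℕ))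
      ≤ Order.succ (b : Ordinal) := Order.succ_le_succ (rank_wt_coe b)
    _ ≤ ω := Order.succ_le_iff.mpr (Ordinal.nat_lt_omega0 b)

lemma low (n : ℕ) :
    (n : Ordinal) ≤ rankedRank (⟨false, (n : WithTop ℕ)⟩ :
      Σ _ : Bool, WithTop ℕ) := by
  induction n with
  | zero => exact zero_le
  | succ n IH =>
    have hrel : RankedLT (⟨false, (n : WithTop ℕ)⟩ : Σ _ : Bool, WithTop ℕ)
        ⟨false, ((n + 1 : ℕ) : WithTop ℕ)⟩ :=
      Or.inl ⟨rfl, show (n : WithTop ℕ) < ((n + 1 : ℕ) : WithTop ℕ) from by exact_mod_cast Nat.lt_succ_self n⟩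
    have h2 := IsWellFounded.rank_lt_of_rel hrel
    have : (n : Ordinal) < rankedRank (⟨false, ((n + 1 : ℕ) : WithTop ℕ)⟩ :
        Σ _ : Bool, WithTop ℕ) := lt_of_le_of_lt IH h2
    calc ((n + 1 : ℕ) : Ordinal) = (n : Ordinal) + 1 := by push_cast; ring
      _ = Order.succ (n : Ordinal) := Ordinal.add_one_eq_succ _
      _ ≤ _ := Order.succ_le_iff.mpr this

lemma existential_part :
    ∃ (T : Type) (_ : PartialOrder T) (_ : WellFoundedLT T)
        (P : T → Type) (_ : ∀ t, PartialOrder (P t)) (_ : ∀ t, WellFoundedLT (P t))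
        (a : Σ t, P t),
        IsWellFounded.rank (α := T) (· < ·) a.1 + primRank a < rankedRank a := by
  refine ⟨Bool, inferInstance, inferInstance, fun _ => WithTop ℕ, fun _ => inferInstance,
    fun _ => inferInstance, ⟨true, ⊤⟩, ?_⟩
  have hle : IsWellFounded.rank (α := Bool) (· < ·) true
      + primRank (⟨true, (⊤ : WithTop ℕ)⟩ : Σ _ : Bool, WithTop ℕ) ≤ 1 + ω :=
    add_le_add rank_bool_true rank_wt_top
  have hlow : ω ≤ rankedRank (⟨false, (⊤ : WithTop ℕ)⟩ : Σ _ : Bool, WithTop ℕ) := by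
    rw [Ordinal.omega0_le]
    intro n
    have hrel : RankedLT (⟨false, (n : WithTop ℕ)⟩ : Σ _ : Bool, WithTop ℕ)
        ⟨false, (⊤ : WithTop ℕ)⟩ := Or.inl ⟨rfl, WithTop.coe_lt_top n⟩
    exact (low n).trans (IsWellFounded.rank_lt_of_rel hrel).le
  have hrel : RankedLT (⟨false, (⊤ : WithTop ℕ)⟩ : Σ _ : Bool, WithTop ℕ)
      ⟨true, (⊤ : WithTop ℕ)⟩ := Or.inr ⟨by decide, le_rfl⟩
  have hfin : ω < rankedRank (⟨true, (⊤ : WithTop ℕ)⟩ : Σ _ : Bool, WithTop ℕ) :=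
    lt_of_le_of_lt hlow (IsWellFounded.rank_lt_of_rel hrel)
  calc IsWellFounded.rank (α := Bool) (· < ·) true
        + primRank (⟨true, (⊤ : WithTop ℕ)⟩ : Σ _ : Bool, WithTop ℕ) ≤ 1 + ω := hle
    _ = ω := Ordinal.one_add_omega0
    _ < _ := hfin

/-- Counterexample to Lemma 12 of Malicki–Rutkowski: `T = {0,1}`, `P_0 = P_1 = ω + 1`,
`a` the maximum of `P_1`. -/
theorem counterexample_lemma12 :
    (∃ (T : Type) (_ : PartialOrder T) (_ : WellFoundedLT T)
        (P : T → Type) (_ : ∀ t, PartialOrder (P t)) (_ : ∀ t, WellFoundedLT (P t))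
        (a : Σ t, P t),
        IsWellFounded.rank (α := T) (· < ·) a.1 + primRank a < rankedRank a) ∧
    (∀ a : Σ _ : Set.Iic (1 : Ordinal), Set.Iic (ω : Ordinal),
      a = ⟨⟨1, Set.self_mem_Iic⟩, ⟨ω, Set.self_mem_Iic⟩⟩ →
      rankedRank a = ω + 1 ∧
      IsWellFounded.rank (α := Set.Iic (1 : Ordinal)) (· < ·) a.1 + primRank a = ω ∧
      (ω : Ordinal.{1}) < ω + 1) := by
  constructor
  · exact existential_part
  · rintro a rfl
    refine ⟨rank_max, ?_, ?_⟩
    · dsimp only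
      rw [rank_Iic 1 1 Set.self_mem_Iic, primRank_Iic, Ordinal.lift_one]
      dsimp only
      rw [Ordinal.lift_omega0]
      exact Ordinal.one_add_omega0
    · rw [Ordinal.add_one_eq_succ]
      exact Order.lt_succ _
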